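/- (Proposition 3, uniform bound) For the PIE iterates x, for every N ∈ ℕ, ‖x N − x 0‖ ≤ κ, where κ := K / (1 − √α₀) = (1/(1 − √α₀)) · ((1/√α₀ − 1)·C₁ + λ·C₂). In particular, the total modification made by PIE to any input is bounded by the constant κ. -/

import Mathlib

open Finset in
/-- Proposition 3, uniform bound: the total modification made by PIE is bounded by κ. -/
theorem pie_prop3_uniform {V : Type*} [NormedAddCommGroup V] [NormedSpace ℝ V]
    (α₀ lam : ℝ) (hα₀ : 0 < α₀) (hα₀' : α₀ < 1) (hlam : 0 ≤ lam)
    (x₀ : V) (e : ℕ → V) (x : ℕ → V)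
    (hx : ∀ N : ℕ, x N = (Real.sqrt α₀) ^ N • x₀
        + lam • ∑ i ∈ Finset.Icc 1 N, (Real.sqrt α₀) ^ i • e i)
    (C₁ C₂ : ℝ) (hC₁ : 0 ≤ C₁) (hC₂ : 0 ≤ C₂)
    (hx₀ : ‖x₀‖ ≤ C₁) (he : ∀ n : ℕ, 1 ≤ n → ‖e n‖ ≤ C₂)
    (K : ℝ) (hK : K = (1 / Real.sqrt α₀ - 1) * C₁ + lam * C₂)
    (κ : ℝ) (hκ : κ = K / (1 - Real.sqrt α₀))
    (N : ℕ) :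
    ‖x N - x 0‖ ≤ κ := by
  set a := Real.sqrt α₀ with ha_def
  have ha : 0 < a := Real.sqrt_pos.mpr hα₀
  have ha1 : a < 1 := by
    rw [ha_def, show (1:ℝ) = Real.sqrt 1 by simp]
    exact Real.sqrt_lt_sqrt hα₀.le hα₀'
  have h1a : 0 < 1 - a := by linarith
  have hx0 : x 0 = x₀ := by simp [hx 0]
  have hκ' : κ = C₁ / a + lam * C₂ / (1 - a) := by
    rw [hκ, hK]
    field_simp
  have hdiff : x N - x 0 = (a ^ N - 1) • x₀
      + lam • ∑ i ∈ Finset.Icc 1 N, a ^ i • e i := by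
    rw [hx N, hx0, sub_smul, one_smul]; abel
  rw [hdiff, hκ']
  have hpow : a ^ N ≤ 1 := pow_le_one₀ ha.le ha1.le
  have hpow0 : 0 ≤ a ^ N := pow_nonneg ha.le N
  have hsum : ‖∑ i ∈ Finset.Icc 1 N, a ^ i • e i‖ ≤ C₂ / (1 - a) := by
    calc ‖∑ i ∈ Finset.Icc 1 N, a ^ i • e i‖
        ≤ ∑ i ∈ Finset.Icc 1 N, ‖a ^ i • e i‖ := norm_sum_le _ _
      _ ≤ ∑ i ∈ Finset.Icc 1 N, a ^ i * C₂ := by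
          refine Finset.sum_le_sum fun i hi => ?_
          rw [norm_smul, Real.norm_eq_abs, abs_of_nonneg (pow_nonneg ha.le i)]
          exact mul_le_mul_of_nonneg_left (he i (Finset.mem_Icc.mp hi).1)
            (pow_nonneg ha.le i)
      _ = (∑ i ∈ Finset.Icc 1 N, a ^ i) * C₂ := by rw [Finset.sum_mul]
      _ ≤ (1 / (1 - a)) * C₂ := by
          refine mul_le_mul_of_nonneg_right ?_ hC₂
          have : ∑ i ∈ Finset.Icc 1 N, a ^ i ≤ ∑ i ∈ Finset.range (N + 1), a ^ i := by
            refine Finset.sum_le_sum_of_subset_of_nonneg ?_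
              (fun i _ _ => pow_nonneg ha.le i)
            intro i hi
            simp only [Finset.mem_Icc] at hi
            exact Finset.mem_range.mpr (by omega)
          refine this.trans ?_
          rw [geom_sum_eq (by linarith : a ≠ 1)]
          have heq : (a ^ (N + 1) - 1) / (a - 1) = (1 - a ^ (N + 1)) / (1 - a) := by
            rw [div_eq_div_iff (by linarith) (by linarith)]; ring
          rw [heq]
          have h0 : 0 ≤ a ^ (N + 1) := pow_nonneg ha.le _
          gcongr
          linarith
      _ = C₂ / (1 - a) := by ring
  calc ‖(a ^ N - 1) • x₀ + lam • ∑ i ∈ Finset.Icc 1 N, a ^ i • e i‖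
      ≤ ‖(a ^ N - 1) • x₀‖ + ‖lam • ∑ i ∈ Finset.Icc 1 N, a ^ i • e i‖ :=
        norm_add_le _ _
    _ ≤ 1 * C₁ + lam * (C₂ / (1 - a)) := by
        refine add_le_add ?_ ?_
        · rw [norm_smul, Real.norm_eq_abs, abs_of_nonpos (by linarith)]
          exact mul_le_mul (by linarith) hx₀ (norm_nonneg _) (by norm_num)
        · rw [norm_smul, Real.norm_eq_abs, abs_of_nonneg hlam]
          exact mul_le_mul_of_nonneg_left hsum hlam
    _ ≤ C₁ / a + lam * C₂ / (1 - a) := by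
        have : C₁ ≤ C₁ / a := by
          rw [le_div_iff₀ ha]; nlinarith
        rw [mul_div_assoc]
        linarith
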